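/- Let F : ℍ → ℂ be a function holomorphic on the upper half plane which is invariant under translation by 2πi(m + nℏ) for all positive integers m, n, where ℏ > 0 is irrational; then F is constant. -/

import Mathlib

open Complex Real

lemma dense_aux (ℏ : ℝ) (hirr : Irrational ℏ) :
    Dense {r : ℝ | ∃ a b : ℤ, r = 2*π*a + 2*π*ℏ*b} := by
  set S : AddSubgroup ℝ :=
    { carrier := {r : ℝ | ∃ a b : ℤ, r = 2*π*a + 2*π*ℏ*b}
      add_mem' := by
        rintro x y ⟨a, b, rfl⟩ ⟨c, d, rfl⟩
        exact ⟨a + c, b + d, by push_cast; ring⟩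
      zero_mem' := ⟨0, 0, by norm_num⟩
      neg_mem' := by
        rintro x ⟨a, b, rfl⟩
        exact ⟨-a, -b, by push_cast; ring⟩ } with hS
  rcases S.dense_or_cyclic with h | ⟨g, hg⟩
  · exact h
  · exfalso
    have h1 : (2*π : ℝ) ∈ S := ⟨1, 0, by norm_num⟩
    have h2 : (2*π*ℏ : ℝ) ∈ S := ⟨0, 1, by norm_num⟩
    rw [hg, AddSubgroup.mem_closure_singleton] at h1 h2
    obtain ⟨m, hm⟩ := h1
    obtain ⟨n, hn⟩ := h2
    simp only [zsmul_eq_mul] at hm hn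
    have hg0 : (m : ℝ) * g ≠ 0 := by rw [hm]; positivity
    have hm0 : (m : ℝ) ≠ 0 := fun h => hg0 (by rw [h, zero_mul])
    apply hirr
    refine ⟨(n : ℚ) / (m : ℚ), ?_⟩
    have h2π : (2*π:ℝ) ≠ 0 := by positivity
    have key : ℏ = (n : ℝ) / (m : ℝ) := by
      rw [eq_div_iff hm0]
      have h5 : (n:ℝ) * ((m:ℝ) * g) = (m:ℝ) * ((n:ℝ) * g) := by ring
      rw [hm, hn] at h5
      have h3 : (2*π) * (n:ℝ) = (2*π) * ((m:ℝ)*ℏ) := by linear_combination h5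
      have h4 := mul_left_cancel₀ h2π h3
      linarith
    rw [key]; push_cast; ring

/-- A function holomorphic on the upper half plane and invariant under the translations
z ↦ z + 2πi(m + nℏ) for all positive integers m, n, with ℏ > 0 irrational, is constant. -/
theorem periodic_holomorphic_is_constant
    (ℏ : ℝ) (hℏ : 0 < ℏ) (hirr : Irrational ℏ)
    (F : ℂ → ℂ)
    (hol : DifferentiableOn ℂ F {z : ℂ | 0 < z.im})
    (hinv : ∀ (m n : ℕ), 0 < m → 0 < n → ∀ z : ℂ, 0 < z.im →
      F (z + 2 * Real.pi * Complex.I * ((m : ℂ) + (n : ℂ) * (ℏ : ℂ))) = F z) :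
    ∀ z w : ℂ, 0 < z.im → 0 < w.im → F z = F w := by
  have hπ := Real.pi_pos
  have hopen : IsOpen {z : ℂ | 0 < z.im} := isOpen_lt continuous_const Complex.continuous_im
  have him : ∀ (u : ℂ) (r : ℝ), (u + (r:ℂ)*I).im = u.im + r := by
    intro u r; simp
  -- period 2π
  have h1 : ∀ u : ℂ, 0 < u.im → F (u + ((2*π:ℝ):ℂ)*I) = F u := by
    intro u hu
    have e1 := hinv 2 1 (by norm_num) (by norm_num) u hu
    have e2 := hinv 1 1 (by norm_num) (by norm_num) (u + ((2*π:ℝ):ℂ)*I)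
      (by rw [him]; positivity)
    have hpt : u + ((2*π:ℝ):ℂ)*I + 2 * (π:ℂ) * I * (((1:ℕ):ℂ) + ((1:ℕ):ℂ) * (ℏ:ℂ))
        = u + 2 * (π:ℂ) * I * (((2:ℕ):ℂ) + ((1:ℕ):ℂ) * (ℏ:ℂ)) := by
      push_cast; ring
    rw [hpt, e1] at e2
    exact e2.symm
  -- period 2πℏ
  have h2 : ∀ u : ℂ, 0 < u.im → F (u + ((2*π*ℏ:ℝ):ℂ)*I) = F u := by
    intro u hu
    have e1 := hinv 1 1 (by norm_num) (by norm_num) u hu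
    have e2 := h1 (u + ((2*π*ℏ:ℝ):ℂ)*I) (by rw [him]; positivity)
    have hpt : u + ((2*π*ℏ:ℝ):ℂ)*I + ((2*π:ℝ):ℂ)*I
        = u + 2 * (π:ℂ) * I * (((1:ℕ):ℂ) + ((1:ℕ):ℂ) * (ℏ:ℂ)) := by
      push_cast; ring
    rw [hpt, e1] at e2
    exact e2.symm
  -- iterate a nonnegative period
  have hiter : ∀ (r : ℝ), 0 ≤ r → (∀ u : ℂ, 0 < u.im → F (u + (r:ℂ)*I) = F u) →
      ∀ (k : ℕ) (u : ℂ), 0 < u.im → F (u + ((k*r:ℝ):ℂ)*I) = F u := by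
    intro r hr hper k
    induction k with
    | zero => intro u hu; norm_num
    | succ k ih =>
      intro u hu
      have hu' : 0 < (u + (r:ℂ)*I).im := by rw [him]; linarith
      have e1 := ih (u + (r:ℂ)*I) hu'
      have hpt : u + (r:ℂ)*I + ((k*r:ℝ):ℂ)*I = u + (((k+1:ℕ)*r:ℝ):ℂ)*I := by
        push_cast; ring
      rw [hpt] at e1
      rw [e1, hper u hu]
  -- integer combinations, b ≥ 0 case
  have haux : ∀ (a : ℤ) (b : ℕ) (u v : ℂ), 0 < u.im → 0 < v.im →
      v = u + ((2*π*(a + b*ℏ):ℝ):ℂ)*I → F v = F u := by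
    intro a b u v hu hv hveq
    have hNM : ((a.toNat : ℤ)) - (((-a).toNat : ℤ)) = a := by omega
    have hNMc : ((a.toNat : ℂ)) - (((-a).toNat : ℂ)) = (a : ℂ) := by exact_mod_cast hNM
    have e1 : F (u + (((a.toNat : ℕ)*(2*π):ℝ):ℂ)*I) = F u :=
      hiter (2*π) (by positivity) h1 a.toNat u hu
    have hu' : 0 < (u + (((a.toNat : ℕ)*(2*π):ℝ):ℂ)*I).im := by
      rw [him]; positivity
    have e2 : F (u + (((a.toNat : ℕ)*(2*π):ℝ):ℂ)*I + ((b*(2*π*ℏ):ℝ):ℂ)*I)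
        = F (u + (((a.toNat : ℕ)*(2*π):ℝ):ℂ)*I) :=
      hiter (2*π*ℏ) (by positivity) h2 b _ hu'
    have e3 : F (v + ((((-a).toNat : ℕ)*(2*π):ℝ):ℂ)*I) = F v :=
      hiter (2*π) (by positivity) h1 (-a).toNat v hv
    have key : u + (((a.toNat : ℕ)*(2*π):ℝ):ℂ)*I + ((b*(2*π*ℏ):ℝ):ℂ)*I
        = v + ((((-a).toNat : ℕ)*(2*π):ℝ):ℂ)*I := by
      rw [hveq]; push_cast
      linear_combination (2*(π:ℂ)*I) * hNMc
    rw [key, e3] at e2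
    exact e2.trans e1
  -- integer combinations, general
  have hC : ∀ (a b : ℤ) (u v : ℂ), 0 < u.im → 0 < v.im →
      v = u + ((2*π*(a + b*ℏ):ℝ):ℂ)*I → F v = F u := by
    intro a b u v hu hv hveq
    rcases le_or_gt 0 b with hb | hb
    · have hbn : ((b.toNat : ℤ)) = b := Int.toNat_of_nonneg hb
      apply haux a b.toNat u v hu hv
      have hbr : ((b.toNat : ℕ) : ℝ) = (b:ℝ) := by exact_mod_cast hbn
      rw [hbr]
      exact hveq
    · have hbn : (((-b).toNat : ℤ)) = -b := Int.toNat_of_nonneg (by omega)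
      refine (haux (-a) (-b).toNat v u hv hu ?_).symm
      have hbr : (((-b).toNat : ℝ)) = -(b:ℝ) := by exact_mod_cast hbn
      rw [hveq]
      push_cast [hbr]
      ring
  -- vertical invariance for all real shifts, by density and continuity
  have hE : ∀ u : ℂ, 0 < u.im → ∀ s : ℝ, -u.im < s → F (u + (s:ℂ)*I) = F u := by
    intro u hu s hs
    have hcont : ContinuousOn F {z : ℂ | 0 < z.im} := hol.continuousOn
    set D : Set ℝ := {r : ℝ | ∃ a b : ℤ, r = 2*π*a + 2*π*ℏ*b} with hDdef
    set T : Set ℝ := D ∩ Set.Ioi (-u.im) with hTdef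
    have hscl : s ∈ closure T := by
      have h := (dense_aux ℏ hirr).open_subset_closure_inter (isOpen_Ioi (a := -u.im))
      have := h hs
      rwa [Set.inter_comm] at this
    have hne : (nhdsWithin s T).NeBot := mem_closure_iff_nhdsWithin_neBot.mp hscl
    have hgC : ContinuousAt (fun t : ℝ => F (u + (t:ℂ)*I)) s := by
      have hmem : u + (s:ℂ)*I ∈ {z : ℂ | 0 < z.im} := by
        simp only [Set.mem_setOf_eq, him]; linarith
      have hFc : ContinuousAt F (u + (s:ℂ)*I) :=
        hcont.continuousAt (hopen.mem_nhds hmem)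
      have hic : ContinuousAt (fun t : ℝ => u + (t:ℂ)*I) s :=
        (continuous_const.add (continuous_ofReal.mul continuous_const)).continuousAt
      exact ContinuousAt.comp (g := F) (f := fun t : ℝ => u + (t:ℂ)*I) hFc hic
    have t1 : Filter.Tendsto (fun t : ℝ => F (u + (t:ℂ)*I)) (nhdsWithin s T)
        (nhds (F (u + (s:ℂ)*I))) := hgC.tendsto.mono_left nhdsWithin_le_nhds
    have t2 : Filter.Tendsto (fun t : ℝ => F (u + (t:ℂ)*I)) (nhdsWithin s T)
        (nhds (F u)) := by
      refine Filter.Tendsto.congr' ?_ tendsto_const_nhds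
      filter_upwards [self_mem_nhdsWithin] with t ht
      obtain ⟨⟨a, b, rfl⟩, ht2⟩ := ht
      have harg : 2*π*(a:ℝ) + 2*π*ℏ*(b:ℝ) = 2*π*((a:ℝ) + (b:ℝ)*ℏ) := by ring
      have ht2' : -u.im < 2*π*(a:ℝ) + 2*π*ℏ*(b:ℝ) := ht2
      rw [harg]
      have hvim : 0 < (u + ((2*π*((a:ℝ)+(b:ℝ)*ℏ):ℝ):ℂ)*I).im := by
        rw [him]; rw [harg] at ht2'; linarith
      exact (hC a b u (u + ((2*π*((a:ℝ)+(b:ℝ)*ℏ):ℝ):ℂ)*I) hu hvim rfl).symm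
    exact tendsto_nhds_unique t1 t2
  -- derivative is zero everywhere on the upper half-plane
  have hderiv : ∀ u ∈ {z : ℂ | 0 < z.im}, fderivWithin ℂ F {z : ℂ | 0 < z.im} u = 0 := by
    intro u hu
    have hu' : 0 < u.im := hu
    have hdu : DifferentiableAt ℂ F u := (hol.differentiableAt (hopen.mem_nhds hu))
    have hc : HasDerivAt F (deriv F u) u := hdu.hasDerivAt
    have hinner : HasDerivAt (fun s : ℝ => u + (s:ℂ)*I) ((1:ℂ)*I) (0:ℝ) := by
      have : HasDerivAt (fun s : ℝ => (s:ℂ)) 1 (0:ℝ) := by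
        simpa using (hasDerivAt_id (0:ℝ)).ofReal_comp
      exact (this.mul_const I).const_add u
    have hcomp : HasDerivAt (fun s : ℝ => F (u + (s:ℂ)*I))
        ((ContinuousLinearMap.restrictScalars ℝ
          ((1:ℂ →L[ℂ] ℂ).smulRight (deriv F u))) ((1:ℂ)*I)) (0:ℝ) := by
      have hF := hc.hasFDerivAt.restrictScalars ℝ
      have := hF.comp_hasDerivAt_of_eq (0:ℝ) hinner (by norm_num)
      exact this
    have hEv : (fun s : ℝ => F (u + (s:ℂ)*I)) =ᶠ[nhds (0:ℝ)] (fun _ => F u) := by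
      filter_upwards [Ioi_mem_nhds (show -u.im < (0:ℝ) by linarith)] with t ht
      exact hE u hu' t ht
    have h0 : HasDerivAt (fun s : ℝ => F (u + (s:ℂ)*I)) 0 (0:ℝ) :=
      (hasDerivAt_const (0:ℝ) (F u)).congr_of_eventuallyEq hEv
    have huniq := h0.unique hcomp
    have hderiv0 : deriv F u = 0 := by
      simp only [ContinuousLinearMap.coe_restrictScalars',
        ContinuousLinearMap.smulRight_apply, ContinuousLinearMap.one_apply,
        one_mul, smul_eq_mul] at huniq
      have hI : (I : ℂ) ≠ 0 := I_ne_zero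
      field_simp at huniq
      exact (mul_eq_zero.mp huniq.symm).resolve_left hI
    have hF0 : HasFDerivAt F (0 : ℂ →L[ℂ] ℂ) u := by
      have h5 := hc.hasFDerivAt
      rw [hderiv0] at h5
      have h6 : ContinuousLinearMap.toSpanSingleton ℂ (0:ℂ) = 0 := by
        ext1; simp
      rwa [h6] at h5
    rw [fderivWithin_of_isOpen hopen hu, hF0.fderiv]
  intro z w hz hw
  exact (convex_halfSpace_im_gt 0).is_const_of_fderivWithin_eq_zero hol hderiv hz hw
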